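/- arXiv:1010.1606 — 4 statements merged into one kernel-verified Lean document; each statement's English description precedes it below -/
import Mathlib

section
/- Let A ⊆ B be commutative rings of prime characteristic p such that A is a pure subring of B (i.e., A → B remains injective after tensoring with any A-module, or equivalently here, A is a direct summand of B as an A-module). If B is strongly F-regular, then A is strongly F-regular. -/
/-- `R` is F-finite: `R` is module-finite over itself via the Frobenius `a ↦ a ^ p`. -/
def FFinite (R : Type*) [CommRing R] (p : ℕ) [Fact p.Prime] [CharP R p] : Prop :=
  @Module.Finite R R _ _ (Module.compHom R (frobenius R p))

/-- `R` is strongly F-regular: for every `a` not in any minimal prime, there is `r > 0`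
such that the `R^(r)`-linear map `aF^r : R^(r) → R`, `x ↦ a x ^ (p ^ r)`, splits
`R^(r)`-linearly; a splitting is an additive map `Φ : R → R` satisfying
`Φ (s ^ (p ^ r) * y) = s * Φ y` (i.e. `R^(r)`-linearity) and `Φ (a * x ^ (p ^ r)) = x`. -/
def StronglyFRegular (R : Type*) [CommRing R] (p : ℕ) [Fact p.Prime] [CharP R p] : Prop :=
  ∀ a : R, (∀ P ∈ minimalPrimes R, a ∉ P) → ∃ r : ℕ, 0 < r ∧
    ∃ Φ : R →+ R, (∀ s y : R, Φ (s ^ p ^ r * y) = s * Φ y) ∧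
      ∀ x : R, Φ (a * x ^ p ^ r) = x

theorem stmt2' {A B : Type*} [CommRing A] [CommRing B] (p : ℕ) [Fact p.Prime]
    [CharP A p] [CharP B p] [IsNoetherianRing A] [IsNoetherianRing B]
    (f : A →+* B) (hf : Function.Injective f)
    (ρ : B →+ A) (hlin : ∀ (a : A) (b : B), ρ (f a * b) = a * ρ b)
    (hretr : ∀ a : A, ρ (f a) = a)
    (hB : ∀ a : B, (∀ P ∈ minimalPrimes B, a ∉ P) → ∃ r : ℕ, 0 < r ∧
    ∃ Φ : B →+ B, (∀ s y : B, Φ (s ^ p ^ r * y) = s * Φ y) ∧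
      ∀ x : B, Φ (a * x ^ p ^ r) = x) :
    ∀ a : A, (∀ P ∈ minimalPrimes A, a ∉ P) → ∃ r : ℕ, 0 < r ∧
    ∃ Φ : A →+ A, (∀ s y : A, Φ (s ^ p ^ r * y) = s * Φ y) ∧
      ∀ x : A, Φ (a * x ^ p ^ r) = x := by
  classical
  intro a ha
  -- B is reduced
  obtain ⟨r0, hr0, Φ0, hΦ0lin, hΦ0⟩ :=
    hB 1 (fun P hP h1 => hP.1.1.ne_top ((Ideal.eq_top_iff_one P).mpr h1))
  have hq0 : 1 < p ^ r0 := Nat.one_lt_pow hr0.ne' (Fact.out : p.Prime).one_lt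
  have hstep : ∀ x : B, x ^ p ^ r0 = 0 → x = 0 := by
    intro x hx
    have h := hΦ0 x
    rw [hx, mul_zero, map_zero] at h
    exact h.symm
  have hBred : ∀ x : B, IsNilpotent x → x = 0 := by
    intro x ⟨n, hn⟩
    have key : ∀ m : ℕ, ∀ y : B, y ^ (p ^ r0) ^ m = 0 → y = 0 := by
      intro m
      induction m with
      | zero => intro y hy; simpa using hy
      | succ m ih =>
        intro y hy
        apply hstep
        apply ih
        rw [← pow_mul, mul_comm, ← pow_succ]
        exact hy
    apply key n
    have hnle : n ≤ (p ^ r0) ^ n := (Nat.lt_pow_self hq0 : n < (p ^ r0) ^ n).le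
    calc x ^ (p ^ r0) ^ n = x ^ n * x ^ ((p ^ r0) ^ n - n) := by
          rw [← pow_add, Nat.add_sub_cancel' hnle]
      _ = 0 := by rw [hn, zero_mul]
  -- A: a is a nonzerodivisor
  have hAred : ∀ t : A, IsNilpotent t → t = 0 := by
    intro t ht
    have : f t = 0 := hBred _ (ht.map f)
    exact hf (by simpa using this)
  have hreg : ∀ t : A, a * t = 0 → t = 0 := by
    intro t ht
    by_contra htne
    have hnotnil : ¬ IsNilpotent t := fun h => htne (hAred t h)
    rw [nilpotent_iff_mem_prime] at hnotnil
    push_neg at hnotnil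
    obtain ⟨J, hJ, htJ⟩ := hnotnil
    obtain ⟨P, hP, hPJ⟩ := Ideal.exists_minimalPrimes_le (bot_le : ⊥ ≤ J)
    have hPprime : P.IsPrime := hP.1.1
    have htP : t ∉ P := fun h => htJ (hPJ h)
    have : a * t ∈ P := ht ▸ P.zero_mem
    rcases hPprime.mem_or_mem this with h | h
    · exact ha P hP h
    · exact htP h
  -- find z with z * (f a) = 0 and f a + z not in any minimal prime of B
  set c : B := f a with hc
  have hMfin : (minimalPrimes B).Finite := minimalPrimes.finite_of_isNoetherianRing B
  set Mf : Finset (Ideal B) := hMfin.toFinset with hMf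
  have hMfmem : ∀ Q : Ideal B, Q ∈ Mf ↔ Q ∈ minimalPrimes B := by
    intro Q; simp [hMf]
  set Sf : Finset (Ideal B) := Mf.filter (fun Q => c ∈ Q) with hSf
  set Tf : Finset (Ideal B) := Mf.filter (fun Q => c ∉ Q) with hTf
  set I : Ideal B := Tf.inf id with hI
  have hmem_nil : ∀ x : B, (∀ Q ∈ minimalPrimes B, x ∈ Q) → x = 0 := by
    intro x hx
    apply hBred
    rw [nilpotent_iff_mem_prime]
    intro J hJ
    obtain ⟨P, hP, hPJ⟩ := Ideal.exists_minimalPrimes_le (bot_le : ⊥ ≤ J)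
    exact hPJ (hx P hP)
  -- I is not contained in any Q ∈ Sf
  have hIQ : ∀ Q ∈ Sf, ¬ I ≤ Q := by
    intro Q hQ hle
    have hQmin : Q ∈ minimalPrimes B := (hMfmem Q).mp (Finset.mem_filter.mp hQ).1
    have hQprime : Q.IsPrime := hQmin.1.1
    obtain ⟨Q', hQ', hle'⟩ := (hQprime.inf_le' (s := Tf) (f := id)).mp hle
    have hQ'min : Q' ∈ minimalPrimes B := (hMfmem Q').mp (Finset.mem_filter.mp hQ').1
    have : Q ≤ Q' := hQmin.2 ⟨hQ'min.1.1, bot_le⟩ hle'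
    have hcQ : c ∈ Q := (Finset.mem_filter.mp hQ).2
    exact (Finset.mem_filter.mp hQ').2 (this hcQ)
  -- prime avoidance: get z ∈ I with z ∉ Q for all Q ∈ Sf
  obtain ⟨z, hzI, hzS⟩ : ∃ z ∈ I, ∀ Q ∈ Sf, z ∉ Q := by
    by_contra hcon
    push_neg at hcon
    have hsub : (I : Set B) ⊆ ⋃ Q ∈ (↑Sf : Set (Ideal B)), (Q : Set B) := by
      intro x hx
      obtain ⟨Q, hQ, hxQ⟩ := hcon x hx
      exact Set.mem_biUnion hQ hxQ
    obtain ⟨Q, hQ, hle⟩ := (Ideal.subset_union_prime (⊥ : Ideal B) ⊥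
      (fun Q hQ _ _ => ((hMfmem Q).mp (Finset.mem_filter.mp hQ).1).1.1)).mp hsub
    exact hIQ Q hQ hle
  have hzc : z * c = 0 := by
    apply hmem_nil
    intro Q hQ
    by_cases hcQ : c ∈ Q
    · exact Q.mul_mem_left z hcQ
    · have hQT : Q ∈ Tf := Finset.mem_filter.mpr ⟨(hMfmem Q).mpr hQ, hcQ⟩
      exact Q.mul_mem_right c ((Finset.inf_le (f := id) hQT : I ≤ Q) hzI)
  have hcz : ∀ Q ∈ minimalPrimes B, c + z ∉ Q := by
    intro Q hQ hmem
    by_cases hcQ : c ∈ Q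
    · have hQS : Q ∈ Sf := Finset.mem_filter.mpr ⟨(hMfmem Q).mpr hQ, hcQ⟩
      exact hzS Q hQS (by simpa using Q.sub_mem hmem hcQ)
    · have hQT : Q ∈ Tf := Finset.mem_filter.mpr ⟨(hMfmem Q).mpr hQ, hcQ⟩
      have hzQ : z ∈ Q := (Finset.inf_le (f := id) hQT : I ≤ Q) hzI
      exact hcQ (by simpa using Q.sub_mem hmem hzQ)
  -- use strong F-regularity of B for c + z
  obtain ⟨r, hr, Φ, hΦlin, hΦsplit⟩ := hB (c + z) hcz
  refine ⟨r, hr, ⟨⟨⟨fun y => ρ (Φ (f y)), by simp⟩, fun x y => by simp⟩, ?_, ?_⟩⟩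
  · intro s y
    show ρ (Φ (f (s ^ p ^ r * y))) = s * ρ (Φ (f y))
    rw [map_mul, map_pow, hΦlin, hlin]
  · intro x
    show ρ (Φ (f (a * x ^ p ^ r))) = x
    have hcq : c ^ p ^ r * (z * f x ^ p ^ r) = 0 := by
      obtain ⟨k, hk⟩ : ∃ k, p ^ r = k + 1 :=
        ⟨p ^ r - 1, (Nat.succ_pred_eq_of_pos (pow_pos (Fact.out : p.Prime).pos r)).symm⟩
      calc c ^ p ^ r * (z * f x ^ p ^ r)
          = c ^ k * (z * c) * f x ^ p ^ r := by rw [hk, pow_succ]; ring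
        _ = 0 := by rw [hzc]; ring
    have ht0 : ρ (Φ (z * f x ^ p ^ r)) = 0 := by
      apply hreg
      calc a * ρ (Φ (z * f x ^ p ^ r)) = ρ (f a * Φ (z * f x ^ p ^ r)) := (hlin _ _).symm
        _ = ρ (Φ (c ^ p ^ r * (z * f x ^ p ^ r))) := by rw [hΦlin]
        _ = 0 := by rw [hcq, map_zero, map_zero]
    have hsplit : Φ ((c + z) * f x ^ p ^ r) = f x := hΦsplit (f x)
    calc ρ (Φ (f (a * x ^ p ^ r)))
        = ρ (Φ ((c + z) * f x ^ p ^ r - z * f x ^ p ^ r)) := by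
          rw [map_mul, map_pow]; ring_nf; rw [hc, mul_comm]
      _ = ρ (Φ ((c + z) * f x ^ p ^ r)) - ρ (Φ (z * f x ^ p ^ r)) := by
          rw [map_sub, map_sub]
      _ = x - 0 := by rw [hsplit, hretr, ht0]
      _ = x := sub_zero x

/-- Let `A ⊆ B` be Noetherian F-finite commutative rings of prime
characteristic `p` such that `A` is a direct summand of `B` as an `A`-module
(a pure subring).  If `B` is strongly F-regular then so is `A`. -/
theorem stmt2 {A B : Type*} [CommRing A] [CommRing B] (p : ℕ) [Fact p.Prime]
    [CharP A p] [CharP B p] [IsNoetherianRing A] [IsNoetherianRing B]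
    (hFA : FFinite A p) (hFB : FFinite B p)
    (f : A →+* B) (hf : Function.Injective f)
    (ρ : B →+ A) (hlin : ∀ (a : A) (b : B), ρ (f a * b) = a * ρ b)
    (hretr : ∀ a : A, ρ (f a) = a)
    (hB : StronglyFRegular B p) : StronglyFRegular A p := by
  exact stmt2' p f hf ρ hlin hretr hB
end

section
/- Let R be a commutative ring of prime characteristic p, b ∈ R, and r ≥ 1. Suppose there is an R-module W, a nonzero element x of W that generates a free direct summand of W, and an R^(r)-linear map Ψ : W ⊗ R → W ⊗ R^(r) splitting the map id_W ⊗ bF^r : W ⊗ R^(r) → W ⊗ R (w ⊗ s^(r) ↦ w ⊗ b s^(p^r)). Then the map bF^r : R^(r) → R, s^(r) ↦ b s^(p^r), itself splits as an R^(r)-linear map. -/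
open scoped TensorProduct

/-- Multiplication by `s` on the second factor of `W ⊗ R` (tensor over the prime ring). -/
noncomputable def smulSnd {R W : Type*} [CommRing R] [AddCommGroup W] (s : R) :
    (W ⊗[ℤ] R) →ₗ[ℤ] (W ⊗[ℤ] R) :=
  LinearMap.lTensor W (LinearMap.mulLeft ℤ s)

noncomputable def muMap {R W : Type*} [CommRing R] [AddCommGroup W] [Module R W]
    (π : W →ₗ[R] R) : (W ⊗[ℤ] R) →ₗ[ℤ] R :=
  TensorProduct.lift
    { toFun := fun w => LinearMap.mulLeft ℤ (π w)
      map_add' := by intro a b; ext t; simp [add_mul]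
      map_smul' := by intro n a; ext t; simp [add_mul] }

lemma muMap_tmul {R W : Type*} [CommRing R] [AddCommGroup W] [Module R W]
    (π : W →ₗ[R] R) (w : W) (t : R) : muMap π (w ⊗ₜ[ℤ] t) = π w * t := rfl

lemma muMap_smulSnd {R W : Type*} [CommRing R] [AddCommGroup W] [Module R W]
    (π : W →ₗ[R] R) (s : R) (z : W ⊗[ℤ] R) :
    muMap π (smulSnd s z) = s * muMap π z := by
  induction z using TensorProduct.induction_on with
  | zero => simp
  | tmul w t =>
      have h : (smulSnd s (w ⊗ₜ[ℤ] t) : W ⊗[ℤ] R) = w ⊗ₜ[ℤ] (s * t) := by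
        simp only [smulSnd]
        erw [LinearMap.lTensor_tmul]
        rfl
      rw [h]
      simp [muMap_tmul]
      ring
  | add a b ha hb => simp [map_add, ha, hb, mul_add]

/-- Let `R` be a commutative ring of prime characteristic `p`, `b ∈ R`,
`r ≥ 1`.  Suppose there is an `R`-module `W`, a nonzero `x ∈ W` generating a free direct
summand (witnessed by a functional `π` with `π x = 1`), and an `R^(r)`-linear map
`Ψ : W ⊗ R → W ⊗ R^(r)` splitting `id_W ⊗ bF^r : W ⊗ R^(r) → W ⊗ R`,
`w ⊗ s ↦ w ⊗ b s^(p^r)`.  (Here tensor products are over the prime ring; `R^(r)`-linearity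
of `Ψ` means `Ψ ((s^(p^r)) · z) = s · Ψ z`, where `s` acts by multiplication on the second
factor, and the splitting property reads `Ψ (w ⊗ b s^(p^r)) = w ⊗ s`.)  Then
`bF^r : R^(r) → R`, `s ↦ b s^(p^r)`, itself splits `R^(r)`-linearly. -/
theorem stmt7 {R : Type*} [CommRing R] (p : ℕ) [Fact p.Prime] [CharP R p]
    (b : R) (r : ℕ) (hr : 1 ≤ r)
    (W : Type*) [AddCommGroup W] [Module R W]
    (x : W) (hx : x ≠ 0) (π : W →ₗ[R] R) (hπ : π x = 1)
    (Ψ : (W ⊗[ℤ] R) →+ (W ⊗[ℤ] R))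
    (hΨlin : ∀ (s : R) (z : W ⊗[ℤ] R), Ψ (smulSnd (s ^ p ^ r) z) = smulSnd s (Ψ z))
    (hΨsplit : ∀ (w : W) (s : R), Ψ (w ⊗ₜ[ℤ] (b * s ^ p ^ r)) = w ⊗ₜ[ℤ] s) :
    ∃ Φ : R →+ R, (∀ s y : R, Φ (s ^ p ^ r * y) = s * Φ y) ∧
      ∀ s : R, Φ (b * s ^ p ^ r) = s := by
  refine ⟨((muMap π).toAddMonoidHom.comp Ψ).comp
      ((TensorProduct.mk ℤ W R x).toAddMonoidHom), ?_, ?_⟩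
  · intro s y
    have h1 : (x ⊗ₜ[ℤ] (s ^ p ^ r * y) : W ⊗[ℤ] R) = smulSnd (s ^ p ^ r) (x ⊗ₜ[ℤ] y) := by
      simp only [smulSnd]
      erw [LinearMap.lTensor_tmul]
      rfl
    simp only [AddMonoidHom.comp_apply, LinearMap.toAddMonoidHom_coe,
      TensorProduct.mk_apply, h1, hΨlin, muMap_smulSnd]
  · intro s
    simp [AddMonoidHom.comp_apply, hΨsplit, muMap_tmul, hπ]
end

section
/- Let V be a finite-dimensional representation of a group (or module category with exact tensor products) of dimension n, over a field. For each i ≥ 1 there is an exact Koszul complex 0 → ⋀^i V → Sym₁ V ⊗ ⋀^{i−1} V → Sym₂ V ⊗ ⋀^{i−2} V → ⋯ → Sym_{i−1} V ⊗ ⋀^1 V → Sym_i V → 0. Using the good-dimension function GD (GD(M) = sup{ j : Ext^j(Δ(λ), M) ≠ 0 for some dominant λ }), and assuming GD(A ⊗ B) ≤ GD(A) + GD(B) and that tensor products of good modules are good, the following are equivalent: (1) Sym V is good; (2) ⊕_{i=1}^{n−1} Sym_i V is good; (3) GD(⋀^i V) ≤ i − 1 for i = 1, …, n − 1; (4) GD(⋀^i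 V) ≤ i − 1 for all i ≥ 1. -/
set_option maxHeartbeats 1000000

open CategoryTheory CategoryTheory.Abelian CategoryTheory.Limits

universe w v u

/-- `GD(M) ≤ s`: all Ext-groups `Ext^i(Δ t, M)` with `i > s` vanish, for the fixed
family of test objects `Δ` (e.g. the Weyl modules `Δ(λ)`, `λ` dominant); `M` is good
iff `GD(M) ≤ 0`. -/
def GDle {C : Type u} [Category.{v} C] [Abelian C] [HasExt.{w} C]
    {ι : Type*} (Δ : ι → C) (M : C) (s : ℤ) : Prop :=
  ∀ (i : ℕ), s < (i : ℤ) → ∀ t : ι, Subsingleton (Ext (Δ t) M i)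

section Aux

variable {C : Type u} [Category.{v} C] [Abelian C] [HasExt.{w} C] {ι : Type*} (Δ : ι → C)

lemma GDle_mono {M : C} {s s' : ℤ} (h : GDle Δ M s) (hss : s ≤ s') : GDle Δ M s' :=
  fun i hi t => h i (lt_of_le_of_lt hss hi) t

lemma GDle_of_iso {M M' : C} (e : M ≅ M') {s : ℤ} (h : GDle Δ M s) : GDle Δ M' s := by
  intro i hi t
  have hM := h i hi t
  refine subsingleton_of_forall_eq 0 fun x => ?_
  have hx : x = (x.comp (Ext.mk₀ e.inv) (add_zero i)).comp (Ext.mk₀ e.hom) (add_zero i) := by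
    rw [Ext.comp_assoc_of_third_deg_zero, Ext.mk₀_comp_mk₀, e.inv_hom_id, Ext.comp_mk₀_id]
  rw [hx, Subsingleton.elim (x.comp (Ext.mk₀ e.inv) (add_zero i)) 0, Ext.zero_comp]

lemma GDle_of_isZero {M : C} (h : IsZero M) (s : ℤ) : GDle Δ M s := by
  intro i _ t
  refine subsingleton_of_forall_eq 0 fun x => ?_
  have : x = x.comp (Ext.mk₀ (𝟙 M)) (add_zero i) := (Ext.comp_mk₀_id x).symm
  rw [this, h.eq_of_src (𝟙 M) 0, Ext.mk₀_zero, Ext.comp_zero]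

lemma GDle_ses_left {S : ShortComplex C} (hS : S.ShortExact) {s : ℤ} (hs : 0 ≤ s)
    (h3 : GDle Δ S.X₃ s) (h2 : GDle Δ S.X₂ (s + 1)) : GDle Δ S.X₁ (s + 1) := by
  intro i hi t
  refine subsingleton_of_forall_eq 0 fun z => ?_
  obtain ⟨k, rfl⟩ : ∃ k, i = k + 1 := ⟨i - 1, by omega⟩
  haveI := h2 (k+1) hi t
  haveI := h3 k (by push_cast at hi ⊢; omega) t
  have h1 : z.comp (Ext.mk₀ S.f) (add_zero _) = 0 :=
    Subsingleton.elim (α := Ext (Δ t) S.X₂ (k+1)) _ _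
  obtain ⟨x₃, hx₃⟩ := Ext.covariant_sequence_exact₁ (Δ t) hS z h1 rfl
  have hx0 : x₃ = 0 := Subsingleton.elim (α := Ext (Δ t) S.X₃ k) _ _
  rw [← hx₃, hx0, Ext.zero_comp]

lemma GDle_ses_right {S : ShortComplex C} (hS : S.ShortExact) {s : ℤ}
    (h2 : GDle Δ S.X₂ s) (h1 : GDle Δ S.X₁ (s + 1)) : GDle Δ S.X₃ s := by
  intro i hi t
  refine subsingleton_of_forall_eq 0 fun z => ?_
  haveI := h2 i hi t
  haveI := h1 (i+1) (by push_cast at hi ⊢; omega) t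
  have hz : z.comp hS.extClass rfl = 0 :=
    Subsingleton.elim (α := Ext (Δ t) S.X₁ (i+1)) _ _
  obtain ⟨x₂, hx₂⟩ := Ext.covariant_sequence_exact₃ (Δ t) hS z rfl hz
  have hx0 : x₂ = 0 := Subsingleton.elim (α := Ext (Δ t) S.X₂ i) _ _
  rw [← hx₂, hx0, Ext.zero_comp]

/-- Dimension shifting along an exact sequence `0 → A → X 0 → ⋯ → X (m-1) → X m → 0`. -/
lemma lemAB : ∀ (m : ℕ) (a : ℤ), (m : ℤ) ≤ a →
    ∀ (A : C) (X : ℕ → C) (d0 : A ⟶ X 0) (d : ∀ j, X j ⟶ X (j+1)),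
    Mono d0 →
    (∀ _ : 0 < m, ∃ w : d0 ≫ d 0 = 0, (ShortComplex.mk d0 (d 0) w).Exact) →
    (∀ j, j + 1 < m → ∃ w : d j ≫ d (j+1) = 0, (ShortComplex.mk (d j) (d (j+1)) w).Exact) →
    (m = 0 → Epi d0) → (∀ k, k + 1 = m → Epi (d k)) →
    (∀ j, j < m → GDle Δ (X j) (a - (j+1))) →
    ((GDle Δ (X m) (a - m) → GDle Δ A a) ∧ (GDle Δ A a → GDle Δ (X m) (a - m))) := by
  intro m
  induction m with
  | zero =>
    intro a _ A X d0 d hmono _ _ hepi0 _ _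
    haveI := hmono
    haveI := hepi0 rfl
    haveI : IsIso d0 := isIso_of_mono_of_epi d0
    constructor
    · intro h; exact GDle_of_iso Δ (asIso d0).symm (by simpa using h)
    · intro h; simpa using GDle_of_iso Δ (asIso d0) h
  | succ m ih =>
    intro a ha A X d0 d hmono hex0 hex hepi0 hepil hbound
    obtain ⟨w0, ex0⟩ := hex0 (Nat.succ_pos m)
    haveI := hmono
    let d0' : cokernel d0 ⟶ X 1 := cokernel.desc d0 (d 0) w0
    have hπd : cokernel.π d0 ≫ d0' = d 0 := cokernel.π_desc _ _ _
    have hses : (ShortComplex.mk d0 (cokernel.π d0) (cokernel.condition d0)).ShortExact := by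
      refine ShortComplex.ShortExact.mk' ?_ hmono inferInstance
      exact ShortComplex.exact_of_g_is_cokernel _ (cokernelIsCokernel d0)
    have hmono' : Mono d0' := by
      rw [ShortComplex.exact_iff_mono_cokernel_desc] at ex0
      exact ex0
    have key := ih (a - 1) (by push_cast at ha ⊢; omega) (cokernel d0)
      (fun j => X (j+1)) d0' (fun j => d (j+1)) hmono'
      (fun hm => by
        obtain ⟨w1, ex1⟩ := hex 0 (by omega)
        have w' : d0' ≫ d 1 = 0 := by
          rw [← cancel_epi (cokernel.π d0), comp_zero, ← Category.assoc, hπd, w1]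
        refine ⟨w', ?_⟩
        let φ : ShortComplex.mk (d 0) (d 1) w1 ⟶ ShortComplex.mk d0' (d 1) w' :=
          { τ₁ := cokernel.π d0, τ₂ := 𝟙 _, τ₃ := 𝟙 _,
            comm₁₂ := by simp [hπd], comm₂₃ := by simp }
        haveI : Epi φ.τ₁ := by dsimp [φ]; infer_instance
        haveI : IsIso φ.τ₂ := by dsimp [φ]; infer_instance
        haveI : Mono φ.τ₃ := by dsimp [φ]; infer_instance
        exact (ShortComplex.exact_iff_of_epi_of_isIso_of_mono φ).1 ex1)
      (fun j hj => hex (j+1) (by omega))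
      (fun hm => by
        have h1 := hepil 0 (by omega)
        rw [← hπd] at h1
        exact @epi_of_epi _ _ _ _ _ _ _ h1)
      (fun k hk => hepil (k+1) (by omega))
      (fun j hj => GDle_mono Δ (hbound (j+1) (by omega)) (by push_cast; omega))
    constructor
    · intro hQ
      have hco : GDle Δ (cokernel d0) (a - 1) :=
        key.1 (GDle_mono Δ hQ (by push_cast; omega))
      have h2 : GDle Δ (X 0) ((a - 1) + 1) :=
        GDle_mono Δ (hbound 0 (by omega)) (by push_cast; omega)
      have := GDle_ses_left Δ hses (by push_cast at ha; omega) hco h2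
      exact GDle_mono Δ this (by omega)
    · intro hA
      have h2 : GDle Δ (X 0) (a - 1) :=
        GDle_mono Δ (hbound 0 (by omega)) (by push_cast; omega)
      have hco := GDle_ses_right Δ hses h2 (GDle_mono Δ hA (by omega))
      exact GDle_mono Δ (key.2 hco) (by push_cast; omega)

omit [HasExt.{w} C] in
lemma exact_conj {A₁ A₂ A₃ B₁ B₂ B₃ : C} (f : A₁ ⟶ A₂) (g : A₂ ⟶ A₃) (w : f ≫ g = 0)
    (h : (ShortComplex.mk f g w).Exact)
    (e₁ : A₁ ≅ B₁) (e₂ : A₂ ≅ B₂) (e₃ : A₃ ≅ B₃)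
    (f' : B₁ ⟶ B₂) (g' : B₂ ⟶ B₃)
    (hf : f' = e₁.inv ≫ f ≫ e₂.hom) (hg : g' = e₂.inv ≫ g ≫ e₃.hom) :
    ∃ w' : f' ≫ g' = 0, (ShortComplex.mk f' g' w').Exact := by
  have w' : f' ≫ g' = 0 := by
    subst hf hg
    simp [reassoc_of% w]
  refine ⟨w', ShortComplex.exact_of_iso (ShortComplex.isoMk e₁ e₂ e₃ ?_ ?_) h⟩
  · subst hf; simp
  · subst hg; simp

lemma fromKoszul {S E : ℕ → C} [MonoidalCategory C] (i : ℕ) (hi : 1 ≤ i)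
    (hK' : ∃ K : ComposableArrows C (i + 2), K.Exact ∧
      IsZero (K.obj' 0) ∧ IsZero (K.obj' (i + 2)) ∧
      Nonempty (K.obj' 1 ≅ E i) ∧ Nonempty (K.obj' (i + 1) (Nat.le_of_lt_succ (by omega)) ≅ S i) ∧
      ∀ (j : ℕ) (h1 : 1 ≤ j) (h2 : j ≤ i - 1),
        Nonempty (K.obj' (1 + j) (by omega) ≅ MonoidalCategory.tensorObj (S j) (E (i - j))))
    (hTb : ∀ j, 1 ≤ j → j ≤ i - 1 →
      GDle Δ (MonoidalCategory.tensorObj (S j) (E (i - j))) ((i:ℤ) - 1 - j)) :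
    ((GDle Δ (S i) 0 → GDle Δ (E i) ((i:ℤ) - 1)) ∧
      (GDle Δ (E i) ((i:ℤ) - 1) → GDle Δ (S i) 0)) := by
  obtain ⟨K, hK, h0, htop, ⟨eE⟩, ⟨eS⟩, hT⟩ := hK'
  let idx : ℕ → Fin (i + 3) := fun j => ⟨min (j + 2) (i + 1), by omega⟩
  let X : ℕ → C := fun j => K.obj (idx j)
  have hidx : ∀ (j : ℕ) (h : j + 2 ≤ i + 1), idx j = ⟨j + 2, by omega⟩ := fun j h => by
    simp only [idx, Fin.mk.injEq]; omega
  let d : ∀ j, X j ⟶ X (j+1) :=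
    fun j => K.map (homOfLE (by simp only [idx, Fin.mk_le_mk]; omega))
  let d0 : K.obj' 1 ⟶ X 0 :=
    K.map' 1 2 ≫ eqToHom (congrArg K.obj (hidx 0 (by omega))).symm
  have hd : ∀ (j : ℕ) (h : j + 3 ≤ i + 1),
      d j = eqToHom (congrArg K.obj (hidx j (by omega))) ≫
        K.map' (j+2) (j+3) (by omega) (by omega) ≫
        eqToHom (congrArg K.obj (hidx (j+1) (by omega))).symm := by
    intro j h
    dsimp only [d, ComposableArrows.map']
    rw [← eqToHom_map K, ← eqToHom_map K, ← K.map_comp, ← K.map_comp]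
    · exact congrArg K.map (Subsingleton.elim _ _)
    · exact (hidx (j+1) (by omega)).symm
    · exact hidx j (by omega)
  have hmono : Mono d0 := by
    haveI : Mono (K.map' 1 2) := (hK.exact 0 (by omega)).mono_g (h0.eq_of_src _ _)
    exact mono_comp _ _
  have key := lemAB Δ (i - 1) ((i:ℤ) - 1) (by omega) (K.obj' 1) X d0 d hmono
    (fun hm => by
      refine exact_conj (K.map' 1 2) (K.map' 2 3 (by omega) (by omega))
        (hK.toIsComplex.zero 1 (by omega)) (hK.exact 1 (by omega))
        (Iso.refl _) (eqToIso (congrArg K.obj (hidx 0 (by omega))).symm)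
        (eqToIso (congrArg K.obj (hidx 1 (by omega))).symm) d0 (d 0) ?_ ?_
      · simp only [Iso.refl_inv, Category.id_comp]; rfl
      · rw [hd 0 (by omega)]; rfl)
    (fun j hj => by
      refine exact_conj (K.map' (j+2) (j+3) (by omega) (by omega))
        (K.map' (j+3) (j+4) (by omega) (by omega))
        (hK.toIsComplex.zero (j+2) (by omega)) (hK.exact (j+2) (by omega))
        (eqToIso (congrArg K.obj (hidx j (by omega))).symm)
        (eqToIso (congrArg K.obj (hidx (j+1) (by omega))).symm)
        (eqToIso (congrArg K.obj (hidx (j+2) (by omega))).symm)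
        (d j) (d (j+1)) ?_ ?_
      · rw [hd j (by omega)]; rfl
      · rw [hd (j+1) (by omega)]; rfl)
    (fun hm => by
      obtain rfl : i = 1 := by omega
      haveI : Epi (K.map' 1 2) := (hK.exact 1 (by omega)).epi_f (htop.eq_of_tgt _ _)
      exact epi_comp _ _)
    (fun k hk => by
      obtain rfl : i = k + 2 := by omega
      rw [hd k (by omega)]
      haveI : Epi (K.map' (k+2) (k+3) (by omega) (by omega)) :=
        (hK.exact (k+2) (by omega)).epi_f (htop.eq_of_tgt _ _)
      exact epi_comp _ _)
    (fun j hj => by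
      obtain ⟨e⟩ := hT (j+1) (by omega) (by omega)
      refine GDle_of_iso Δ
        (e.symm ≪≫ eqToIso (congrArg K.obj (show (⟨1 + (j+1), by omega⟩ : Fin (i+3)) = idx j
          from by simp only [idx, Fin.mk.injEq]; omega)))
        (GDle_mono Δ (hTb (j+1) (by omega) (by omega)) (by push_cast; omega)))
  constructor
  · intro hS
    refine GDle_of_iso Δ eE (key.1 ?_)
    refine GDle_mono Δ (GDle_of_iso Δ
      (eS.symm ≪≫ eqToIso (congrArg K.obj (show (⟨i + 1, by omega⟩ : Fin (i+3)) = idx (i-1)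
        from by simp only [idx, Fin.mk.injEq]; omega))) hS) (by omega)
  · intro hE
    have := key.2 (GDle_of_iso Δ eE.symm hE)
    refine GDle_mono Δ (GDle_of_iso Δ
      ((eqToIso (congrArg K.obj (show (⟨i + 1, by omega⟩ : Fin (i+3)) = idx (i-1)
        from by simp only [idx, Fin.mk.injEq]; omega))).symm ≪≫ eS) this) (by omega)

end Aux

theorem stmt9 {C : Type u} [Category.{v} C] [Abelian C] [MonoidalCategory C] [HasExt.{w} C]
    {ι : Type*} (Δ : ι → C) (n : ℕ) (S E : ℕ → C)
    (hS0 : GDle Δ (S 0) 0)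
    (hEn : GDle Δ (E n) 0)
    (hEzero : ∀ i : ℕ, n < i → IsZero (E i))
    (htensor : ∀ (A B : C) (a b : ℤ), GDle Δ A a → GDle Δ B b →
      GDle Δ (MonoidalCategory.tensorObj A B) (a + b))
    (hKoszul : ∀ i : ℕ, 1 ≤ i → ∃ K : ComposableArrows C (i + 2), K.Exact ∧
      IsZero (K.obj' 0) ∧ IsZero (K.obj' (i + 2)) ∧
      Nonempty (K.obj' 1 ≅ E i) ∧ Nonempty (K.obj' (i + 1) ≅ S i) ∧
      ∀ (j : ℕ) (h1 : 1 ≤ j) (h2 : j ≤ i - 1),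
        Nonempty (K.obj' (1 + j) (by omega) ≅ MonoidalCategory.tensorObj (S j) (E (i - j)))) :
    ((∀ i : ℕ, GDle Δ (S i) 0) ↔ (∀ i : ℕ, 1 ≤ i → i ≤ n - 1 → GDle Δ (S i) 0)) ∧
    ((∀ i : ℕ, 1 ≤ i → i ≤ n - 1 → GDle Δ (S i) 0) ↔
      (∀ i : ℕ, 1 ≤ i → i ≤ n - 1 → GDle Δ (E i) ((i : ℤ) - 1))) ∧
    ((∀ i : ℕ, 1 ≤ i → i ≤ n - 1 → GDle Δ (E i) ((i : ℤ) - 1)) ↔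
      (∀ i : ℕ, 1 ≤ i → GDle Δ (E i) ((i : ℤ) - 1))) := by
  have Eext : (∀ i, 1 ≤ i → i ≤ n - 1 → GDle Δ (E i) ((i:ℤ) - 1)) →
      ∀ i, 1 ≤ i → GDle Δ (E i) ((i:ℤ) - 1) := by
    intro hE i hi1
    by_cases h1 : i ≤ n - 1
    · exact hE i hi1 h1
    · by_cases h2 : i = n
      · subst h2; exact GDle_mono Δ hEn (by omega)
      · exact GDle_of_isZero Δ (hEzero i (by omega)) _
  have StoE : (∀ j, 1 ≤ j → j ≤ n - 1 → GDle Δ (S j) 0) →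
      ∀ i, 1 ≤ i → i ≤ n - 1 → GDle Δ (E i) ((i:ℤ) - 1) := by
    intro hS i
    induction i using Nat.strong_induction_on with
    | _ i ih =>
      intro hi1 hin
      refine (fromKoszul Δ i hi1 (hKoszul i hi1) ?_).1 (hS i hi1 hin)
      intro j hj1 hj2
      have hSj := hS j hj1 (by omega)
      have hEij := ih (i - j) (by omega) (by omega) (by omega)
      have := htensor _ _ 0 ((i:ℤ) - (j:ℤ) - 1) hSj (GDle_mono Δ hEij (by omega))
      exact GDle_mono Δ this (by omega)
  have EtoS : (∀ i, 1 ≤ i → GDle Δ (E i) ((i:ℤ) - 1)) →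
      ∀ i, 1 ≤ i → GDle Δ (S i) 0 := by
    intro hE i
    induction i using Nat.strong_induction_on with
    | _ i ih =>
      intro hi1
      refine (fromKoszul Δ i hi1 (hKoszul i hi1) ?_).2 (hE i hi1)
      intro j hj1 hj2
      have := htensor _ _ 0 ((i:ℤ) - (j:ℤ) - 1) (ih j (by omega) hj1)
        (GDle_mono Δ (hE (i - j) (by omega)) (by omega))
      exact GDle_mono Δ this (by omega)
  refine ⟨⟨fun h i _ _ => h i, fun h i => ?_⟩,
    ⟨fun h => StoE h, fun h i h1 _ => EtoS (Eext h) i h1⟩,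
    ⟨fun h => Eext h, fun h i h1 _ => h i h1⟩⟩
  · rcases Nat.eq_zero_or_pos i with rfl | hi
    · exact hS0
    · exact EtoS (Eext (StoE h)) i hi
end

section
/- Let Ω be a finite poset and fix for each ω ∈ Ω the weight 3^(coht ω), where coht(ω) is the maximum length of a chain ω = ω₀ < ω₁ < ⋯ in Ω. For a monomial m = ∏_ω ω^{c(ω)} define w(m) = Σ_ω c(ω)·3^(coht ω). Then: (a) w(m m′) = w(m) + w(m′); and (b) if ξ, η ∈ Ω are incomparable and m is a monomial divisible by some ξ' with ξ' < ξ and ξ' < η, of the same total degree as ξη, then w(m) > w(ξη). Consequently any rewriting process that repeatedly replaces a product ξη of incomparable elements by monomials of the same degree each divisible by an element strictly smaller than both ξ and η terminates in finitely many steps. -/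
section defs

variable {Ω : Type*} [Fintype Ω] [DecidableEq Ω] [PartialOrder Ω]

/-- The weight of a monomial `m = ∏ ω ^ (m ω)` on a finite poset `Ω`:
`w(m) = ∑ ω, m ω · 3 ^ (coht ω)`, where `coht ω` is the maximal length of a chain
going up from `ω`. -/
noncomputable def monWeight (m : Ω → ℕ) : ℕ :=
  ∑ ω : Ω, m ω * 3 ^ (Order.coheight ω).toNat

/-- The total degree of a monomial. -/
def monDeg (m : Ω → ℕ) : ℕ := ∑ ω : Ω, m ω

/-- The monomial `ξ·η`. -/
def monPair (ξ η : Ω) : Ω → ℕ :=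
  fun ω => (if ω = ξ then 1 else 0) + (if ω = η then 1 else 0)

end defs

section aux

variable {Ω : Type*} [Fintype Ω] [DecidableEq Ω] [PartialOrder Ω]

omit [DecidableEq Ω] in
lemma coheight_lt_top' (x : Ω) : Order.coheight x < ⊤ := by
  refine lt_of_le_of_lt (Order.coheight_le fun p _ => ?_) (by simp : (Fintype.card Ω : ℕ∞) < ⊤)
  exact_mod_cast (p.length_lt_card).le

omit [DecidableEq Ω] in
lemma coht_succ_le {x y : Ω} (h : x < y) :
    (Order.coheight y).toNat + 1 ≤ (Order.coheight x).toNat := by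
  have h1 := Order.coheight_strictAnti h (coheight_lt_top' y)
  have hy := (coheight_lt_top' y).ne
  have hx := (coheight_lt_top' x).ne
  lift Order.coheight y to ℕ using hy with a
  lift Order.coheight x to ℕ using hx with b
  simpa using Nat.succ_le_of_lt (by exact_mod_cast h1)

lemma monWeight_pair (ξ η : Ω) (_hne : ξ ≠ η) :
    monWeight (monPair ξ η) =
      3 ^ (Order.coheight ξ).toNat + 3 ^ (Order.coheight η).toNat := by
  unfold monWeight monPair
  simp only [add_mul, Finset.sum_add_distrib, ite_mul, one_mul, zero_mul]
  rw [Finset.sum_ite_eq' Finset.univ ξ, Finset.sum_ite_eq' Finset.univ η]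
  simp

end aux

/-- On a finite poset `Ω`, with `w` the weight above:
(a) `w(m m') = w(m) + w(m')`;
(b) if `ξ, η` are incomparable and `m` is a monomial of the same total degree as `ξη`
divisible by some `ξ'` with `ξ' < ξ` and `ξ' < η`, then `w(m) > w(ξη)`;
(c) consequently, any rewriting process replacing products of incomparable elements by
degree-preserving combinations of monomials divisible by strictly smaller elements
terminates: there is no infinite sequence of monomials of a fixed degree with strictly
increasing weight. -/
theorem stmt10 {Ω : Type*} [Fintype Ω] [DecidableEq Ω] [PartialOrder Ω] :
    (∀ m m' : Ω → ℕ, monWeight (fun ω => m ω + m' ω) = monWeight m + monWeight m') ∧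
    (∀ ξ η : Ω, ¬ ξ ≤ η → ¬ η ≤ ξ → ∀ m : Ω → ℕ, monDeg m = monDeg (monPair ξ η) →
      ∀ ξ' : Ω, ξ' < ξ → ξ' < η → 1 ≤ m ξ' → monWeight (monPair ξ η) < monWeight m) ∧
    (∀ d : ℕ, ¬ ∃ f : ℕ → Ω → ℕ, (∀ k, monDeg (f k) = d) ∧
      ∀ k, monWeight (f k) < monWeight (f (k + 1))) := by
  refine ⟨?_, ?_, ?_⟩
  · intro m m'
    unfold monWeight
    simp [add_mul, Finset.sum_add_distrib]
  · intro ξ η h1 h2 m _ ξ' hξ hη hm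
    have hne : ξ ≠ η := fun h => h1 h.le
    rw [monWeight_pair ξ η hne]
    set cξ := (Order.coheight ξ).toNat
    set cη := (Order.coheight η).toNat
    set cξ' := (Order.coheight ξ').toNat with hc
    have hcξ : cξ + 1 ≤ cξ' := coht_succ_le hξ
    have hcη : cη + 1 ≤ cξ' := coht_succ_le hη
    have key : 3 ^ cξ + 3 ^ cη < 3 ^ cξ' := by
      have h3 : 3 ^ (max cξ cη + 1) ≤ 3 ^ cξ' :=
        Nat.pow_le_pow_right (by norm_num) (by omega)
      have hξle : 3 ^ cξ ≤ 3 ^ max cξ cη := Nat.pow_le_pow_right (by norm_num) (le_max_left _ _)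
      have hηle : 3 ^ cη ≤ 3 ^ max cξ cη := Nat.pow_le_pow_right (by norm_num) (le_max_right _ _)
      have hpos : 0 < 3 ^ max cξ cη := Nat.pow_pos (by norm_num)
      calc 3 ^ cξ + 3 ^ cη < 3 * 3 ^ max cξ cη := by omega
        _ = 3 ^ (max cξ cη + 1) := by ring
        _ ≤ 3 ^ cξ' := h3
    refine lt_of_lt_of_le key ?_
    calc 3 ^ cξ' ≤ m ξ' * 3 ^ cξ' := Nat.le_mul_of_pos_left _ hm
      _ ≤ monWeight m :=
        Finset.single_le_sum (f := fun ω => m ω * 3 ^ (Order.coheight ω).toNat)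
          (fun i _ => Nat.zero_le _) (Finset.mem_univ ξ')
  · intro d ⟨f, hdeg, hlt⟩
    set B : ℕ := Finset.univ.sup fun ω : Ω => (Order.coheight ω).toNat with hB
    have hbound : ∀ k, monWeight (f k) ≤ d * 3 ^ B := by
      intro k
      calc monWeight (f k) ≤ ∑ ω : Ω, f k ω * 3 ^ B := by
            refine Finset.sum_le_sum fun ω _ => Nat.mul_le_mul_left _ ?_
            exact Nat.pow_le_pow_right (by norm_num) (Finset.le_sup (f := fun ω : Ω => (Order.coheight ω).toNat) (Finset.mem_univ ω))
        _ = monDeg (f k) * 3 ^ B := by rw [monDeg, Finset.sum_mul]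
        _ = d * 3 ^ B := by rw [hdeg]
    have hs : StrictMono fun k => monWeight (f k) := strictMono_nat_of_lt_succ hlt
    have : d * 3 ^ B + 1 ≤ monWeight (f (d * 3 ^ B + 1)) := hs.le_apply
    have := hbound (d * 3 ^ B + 1)
    omega
end
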